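/- Let G be a group equipped with a norm ν, let φ : [1,∞) → [0,∞) be an increasing function with ∫₁^∞ φ(t)/t² dt < ∞, and let f : G → ℝ satisfy |f(g) − f(gh) + f(h)| ≤ φ(ν(g) + ν(h)) for all g,h ∈ G. Then for every g ∈ G the limit lim_{n→∞} f(gⁿ)/n exists and is a (finite) real number; i.e., f admits a homogenisation. -/

import Mathlib

open Filter Topology MeasureTheory

lemma int_lb (φ : ℝ → ℝ) (hmono : ∀ s t : ℝ, 1 ≤ s → s ≤ t → φ s ≤ φ t)
    (hnonneg : ∀ t, 0 ≤ φ t)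
    (hint : IntegrableOn (fun t : ℝ => φ t / t ^ 2) (Set.Ici (1 : ℝ)))
    {t : ℝ} (ht : 1 ≤ t) :
    φ t / t ≤ 4 * ∫ s in Set.Ioc t (2*t), φ s / s ^ 2 := by
  have ht0 : (0:ℝ) < t := lt_of_lt_of_le one_pos ht
  have hsub : Set.Ioc t (2*t) ⊆ Set.Ici (1:ℝ) := fun x hx => le_trans ht (le_of_lt hx.1)
  have hI : IntegrableOn (fun s : ℝ => φ s / s ^ 2) (Set.Ioc t (2*t)) := hint.mono_set hsub
  have hconst : ∀ x ∈ Set.Ioc t (2*t), φ t / (4 * t^2) ≤ φ x / x ^ 2 := by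
    intro x hx
    have hx1 : t ≤ x := le_of_lt hx.1
    have hφ : φ t ≤ φ x := hmono t x ht hx1
    have hx0 : (0:ℝ) < x := lt_trans ht0 hx.1
    have h2 : x^2 ≤ 4 * t^2 := by nlinarith [hx.2]
    calc φ t / (4 * t^2) ≤ φ t / x^2 := by
          apply div_le_div_of_nonneg_left (hnonneg t) (by positivity) h2
      _ ≤ φ x / x^2 := by gcongr
  have hmeas : MeasurableSet (Set.Ioc t (2*t)) := measurableSet_Ioc
  have hbound : ∫ x in Set.Ioc t (2*t), (φ t / (4 * t^2)) ≤ ∫ x in Set.Ioc t (2*t), φ x / x ^ 2 :=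
    setIntegral_mono_on (integrableOn_const (by simp [Real.volume_Ioc])) hI hmeas hconst
  have hc : ∫ _x in Set.Ioc t (2*t), (φ t / (4 * t^2)) = t * (φ t / (4 * t^2)) := by
    rw [setIntegral_const, measureReal_def, Real.volume_Ioc, smul_eq_mul]
    congr 1
    rw [ENNReal.toReal_ofReal (by linarith)]
    ring
  have : t * (φ t / (4 * t^2)) = φ t / (4 * t) := by field_simp
  have h4 : φ t / (4*t) ≤ ∫ s in Set.Ioc t (2*t), φ s / s ^ 2 := by
    rw [← this, ← hc]; exact hbound
  have heq : φ t / t = 4 * (φ t / (4*t)) := by field_simp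
  linarith

lemma sum_bound (φ : ℝ → ℝ) (hmono : ∀ s t : ℝ, 1 ≤ s → s ≤ t → φ s ≤ φ t)
    (hnonneg : ∀ t, 0 ≤ φ t)
    (hint : IntegrableOn (fun t : ℝ => φ t / t ^ 2) (Set.Ici (1 : ℝ)))
    {u : ℝ} (hu : 1 ≤ u) (K : ℕ) :
    ∑ k ∈ Finset.range K, φ ((2:ℝ)^(k+1) * u) / 2^(k+1) ≤
      4 * u * ∫ t in Set.Ici (2*u), φ t / t ^ 2 := by
  have hu0 : (0:ℝ) < u := lt_of_lt_of_le one_pos hu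
  -- each term bound
  have hterm : ∀ k : ℕ, φ ((2:ℝ)^(k+1) * u) / 2^(k+1) ≤
      4 * u * ∫ s in Set.Ioc ((2:ℝ)^(k+1)*u) ((2:ℝ)^(k+2)*u), φ s / s ^ 2 := by
    intro k
    have h1 : (1:ℝ) ≤ (2:ℝ)^(k+1) * u := by
      have : (1:ℝ) ≤ (2:ℝ)^(k+1) := one_le_pow₀ (by norm_num)
      nlinarith
    have := int_lb φ hmono hnonneg hint h1
    have h2 : (2:ℝ) * ((2:ℝ)^(k+1)*u) = (2:ℝ)^(k+2)*u := by ring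
    rw [h2] at this
    have hpos : (0:ℝ) < (2:ℝ)^(k+1) := by positivity
    calc φ ((2:ℝ)^(k+1) * u) / 2^(k+1)
        = u * (φ ((2:ℝ)^(k+1) * u) / ((2:ℝ)^(k+1) * u)) := by field_simp
      _ ≤ u * (4 * ∫ s in Set.Ioc ((2:ℝ)^(k+1)*u) ((2:ℝ)^(k+2)*u), φ s / s ^ 2) := by
          exact mul_le_mul_of_nonneg_left this (le_of_lt hu0)
      _ = 4 * u * ∫ s in Set.Ioc ((2:ℝ)^(k+1)*u) ((2:ℝ)^(k+2)*u), φ s / s ^ 2 := by ring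
  -- adjacency: sum of integrals
  have hadj : ∀ K : ℕ, ∑ k ∈ Finset.range K,
      (∫ s in Set.Ioc ((2:ℝ)^(k+1)*u) ((2:ℝ)^(k+2)*u), φ s / s ^ 2) =
      ∫ s in Set.Ioc (2*u) ((2:ℝ)^(K+1)*u), φ s / s ^ 2 := by
    intro K
    induction K with
    | zero => simp [show (2:ℝ)^(0+1)*u = 2*u by ring]
    | succ K ih =>
      rw [Finset.sum_range_succ, ih]
      have hab : (2:ℝ)*u ≤ (2:ℝ)^(K+1)*u := by
        have : (2:ℝ) ≤ (2:ℝ)^(K+1) := by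
          calc (2:ℝ) = 2^1 := (pow_one 2).symm
          _ ≤ 2^(K+1) := by apply pow_le_pow_right₀ (by norm_num); omega
        nlinarith
      have hbc : (2:ℝ)^(K+1)*u ≤ (2:ℝ)^(K+2)*u := by
        have : (2:ℝ)^(K+1) ≤ (2:ℝ)^(K+2) := by apply pow_le_pow_right₀ (by norm_num); omega
        nlinarith
      have hd : Disjoint (Set.Ioc ((2:ℝ)*u) ((2:ℝ)^(K+1)*u))
          (Set.Ioc ((2:ℝ)^(K+1)*u) ((2:ℝ)^(K+2)*u)) := by
        apply Set.disjoint_left.mpr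
        intro x hx hx'
        exact absurd hx'.1 (not_lt.mpr hx.2)
      have hsub1 : Set.Ioc ((2:ℝ)*u) ((2:ℝ)^(K+1)*u) ⊆ Set.Ici (1:ℝ) := by
        intro x hx; exact le_trans (by nlinarith) (le_of_lt hx.1)
      have hsub2 : Set.Ioc ((2:ℝ)^(K+1)*u) ((2:ℝ)^(K+2)*u) ⊆ Set.Ici (1:ℝ) := by
        intro x hx
        have : (1:ℝ) ≤ (2:ℝ)^(K+1)*u := by
          have : (1:ℝ) ≤ (2:ℝ)^(K+1) := one_le_pow₀ (by norm_num)
          nlinarith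
        exact le_trans this (le_of_lt hx.1)
      rw [← setIntegral_union hd measurableSet_Ioc (hint.mono_set hsub1) (hint.mono_set hsub2),
        Set.Ioc_union_Ioc_eq_Ioc hab hbc]
  calc ∑ k ∈ Finset.range K, φ ((2:ℝ)^(k+1) * u) / 2^(k+1)
      ≤ ∑ k ∈ Finset.range K,
        4 * u * ∫ s in Set.Ioc ((2:ℝ)^(k+1)*u) ((2:ℝ)^(k+2)*u), φ s / s ^ 2 :=
        Finset.sum_le_sum (fun k _ => hterm k)
    _ = 4 * u * ∫ s in Set.Ioc (2*u) ((2:ℝ)^(K+1)*u), φ s / s ^ 2 := by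
        rw [← Finset.mul_sum, hadj K]
    _ ≤ 4 * u * ∫ t in Set.Ici (2*u), φ t / t ^ 2 := by
        apply mul_le_mul_of_nonneg_left _ (by positivity)
        apply setIntegral_mono_set (hint.mono_set ?_) ?_ ?_
        · intro x hx; exact le_trans (by nlinarith : (1:ℝ) ≤ 2*u) hx
        · filter_upwards with x using div_nonneg (hnonneg x) (sq_nonneg x)
        · exact HasSubset.Subset.eventuallyLE (fun x hx => le_of_lt hx.1)

lemma tail_tendsto (h : ℝ → ℝ) (hint : IntegrableOn h (Set.Ici (1:ℝ))) :
    Tendsto (fun x : ℝ => ∫ t in Set.Ici x, h t) atTop (𝓝 0) := by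
  have hu : (⋃ x : ℝ, Set.Ico (1:ℝ) x) = Set.Ici 1 := by
    ext y
    simp only [Set.mem_iUnion, Set.mem_Ico, Set.mem_Ici]
    exact ⟨fun ⟨x, hx, _⟩ => hx, fun hy => ⟨y + 1, hy, by linarith⟩⟩
  have hIco : Tendsto (fun x : ℝ => ∫ t in Set.Ico (1:ℝ) x, h t) atTop
      (𝓝 (∫ t in Set.Ici (1:ℝ), h t)) := by
    have := tendsto_setIntegral_of_monotone (μ := volume) (f := h)
      (s := fun x : ℝ => Set.Ico (1:ℝ) x) (fun x => measurableSet_Ico)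
      (fun x y hxy => Set.Ico_subset_Ico_right hxy) (by rw [hu]; exact hint)
    rwa [hu] at this
  have hsplit : ∀ x : ℝ, 1 ≤ x →
      (∫ t in Set.Ici x, h t) = (∫ t in Set.Ici (1:ℝ), h t) - ∫ t in Set.Ico (1:ℝ) x, h t := by
    intro x hx
    have hd : Disjoint (Set.Ico (1:ℝ) x) (Set.Ici x) := by
      apply Set.disjoint_left.mpr
      intro a ha ha'
      exact absurd (Set.mem_Ici.mp ha') (not_le.mpr ha.2)
    have hun : Set.Ico (1:ℝ) x ∪ Set.Ici x = Set.Ici 1 := Set.Ico_union_Ici_eq_Ici hx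
    have := setIntegral_union hd measurableSet_Ici
      (hint.mono_set (by rw [← hun]; exact Set.subset_union_left))
      (hint.mono_set (by rw [← hun]; exact Set.subset_union_right))
    rw [hun] at this
    linarith [this]
  have : Tendsto (fun x : ℝ => (∫ t in Set.Ici (1:ℝ), h t) - ∫ t in Set.Ico (1:ℝ) x, h t)
      atTop (𝓝 0) := by
    have := tendsto_const_nhds (x := ∫ t in Set.Ici (1:ℝ), h t) (f := atTop (α := ℝ)) |>.sub hIco
    simpa using this
  apply this.congr'
  filter_upwards [eventually_ge_atTop (1:ℝ)] with x hx
  exact (hsplit x hx).symm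

lemma almost_additive_limit (φ : ℝ → ℝ)
    (hmono : ∀ s t : ℝ, 1 ≤ s → s ≤ t → φ s ≤ φ t)
    (hnonneg : ∀ t : ℝ, 0 ≤ φ t)
    (hint : IntegrableOn (fun t : ℝ => φ t / t ^ 2) (Set.Ici (1 : ℝ)))
    (a : ℕ → ℝ) (C : ℝ) (hC : 1 ≤ C)
    (key : ∀ n m : ℕ, 1 ≤ n → 1 ≤ m → |a (n+m) - a n - a m| ≤ φ ((↑(n+m)) * C)) :
    ∃ L : ℝ, Tendsto (fun n : ℕ => a n / n) atTop (𝓝 L) := by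
  set T : ℝ → ℝ := fun x => ∫ t in Set.Ici x, φ t / t ^ 2 with hT
  have hT0 : ∀ x, 0 ≤ T x := fun x =>
    setIntegral_nonneg measurableSet_Ici (fun t _ => div_nonneg (hnonneg t) (sq_nonneg t))
  -- summability of the doubling error terms
  have hDsum : ∀ n : ℕ, 1 ≤ n → Summable (fun k : ℕ => φ ((2:ℝ)^(k+1) * (n*C)) / 2^(k+1)) := by
    intro n hn
    have hu : (1:ℝ) ≤ n*C := by
      have h1 : (1:ℝ) ≤ (n:ℝ) := by exact_mod_cast hn
      nlinarith
    apply summable_of_sum_range_le (c := 4 * (n*C) * T (2*(n*C)))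
    · intro k; exact div_nonneg (hnonneg _) (by positivity)
    · intro K; exact sum_bound φ hmono hnonneg hint hu K
  -- the doubling error dominates consecutive differences
  have hdiff : ∀ n : ℕ, 1 ≤ n → ∀ k : ℕ,
      dist (a (2^k * n) / (2:ℝ)^k) (a (2^(k+1) * n) / (2:ℝ)^(k+1)) ≤
        φ ((2:ℝ)^(k+1) * (n*C)) / 2^(k+1) := by
    intro n hn k
    have h1 : 1 ≤ 2^k * n := Nat.mul_pos (pow_pos (by norm_num) k) hn
    have hkey := key (2^k * n) (2^k * n) h1 h1
    have hnat : 2^k * n + 2^k * n = 2^(k+1) * n := by ring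
    rw [hnat] at hkey
    have hcast : ((2^(k+1) * n : ℕ) : ℝ) * C = (2:ℝ)^(k+1) * (n*C) := by push_cast; ring
    rw [hcast] at hkey
    rw [Real.dist_eq]
    have hpos : (0:ℝ) < (2:ℝ)^(k+1) := by positivity
    have heq : a (2^k * n) / (2:ℝ)^k - a (2^(k+1) * n) / (2:ℝ)^(k+1)
        = -(a (2^(k+1) * n) - a (2^k * n) - a (2^k * n)) / 2^(k+1) := by
      rw [pow_succ]
      field_simp
      ring
    rw [heq, abs_div, abs_neg, abs_of_pos hpos]
    gcongr
  -- existence of doubling limits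
  have main : ∀ n : ℕ, 1 ≤ n → ∃ M : ℝ,
      Tendsto (fun k : ℕ => a (2^k * n) / (2:ℝ)^k) atTop (𝓝 M) ∧
      |M - a n| ≤ 4 * (n*C) * T (2*(n*C)) := by
    intro n hn
    have hu : (1:ℝ) ≤ n*C := by
      have h1 : (1:ℝ) ≤ (n:ℝ) := by exact_mod_cast hn
      nlinarith
    set b : ℕ → ℝ := fun k => a (2^k * n) / (2:ℝ)^k with hb
    have hcs : CauchySeq b := cauchySeq_of_summable_dist
      (Summable.of_nonneg_of_le (fun k => dist_nonneg) (hdiff n hn) (hDsum n hn))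
    obtain ⟨M, hM⟩ := cauchySeq_tendsto_of_complete hcs
    refine ⟨M, hM, ?_⟩
    have hb0 : b 0 = a n := by simp [hb]
    have hK : ∀ K : ℕ, dist (b K) (b 0) ≤ 4 * (n*C) * T (2*(n*C)) := by
      intro K
      calc dist (b K) (b 0) = dist (b 0) (b K) := dist_comm _ _
        _ ≤ ∑ k ∈ Finset.range K, dist (b k) (b (k+1)) := dist_le_range_sum_dist b K
        _ ≤ ∑ k ∈ Finset.range K, φ ((2:ℝ)^(k+1) * (n*C)) / 2^(k+1) :=
            Finset.sum_le_sum (fun k _ => hdiff n hn k)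
        _ ≤ 4 * (n*C) * T (2*(n*C)) := sum_bound φ hmono hnonneg hint hu K
    have hTd : Tendsto (fun K => dist (b K) (b 0)) atTop (𝓝 (dist M (b 0))) :=
      hM.dist tendsto_const_nhds
    have hle := le_of_tendsto hTd (Eventually.of_forall hK)
    rwa [hb0, Real.dist_eq] at hle
  choose M hMt hMb using main
  -- additivity of M
  have hadd : ∀ n m (hn : 1 ≤ n) (hm : 1 ≤ m) (hnm : 1 ≤ n + m),
      M (n+m) hnm = M n hn + M m hm := by
    intro n m hn hm hnm
    have hF : Tendsto (fun k : ℕ => a (2^k * (n+m)) / (2:ℝ)^k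
        - a (2^k * n) / (2:ℝ)^k - a (2^k * m) / (2:ℝ)^k) atTop
        (𝓝 (M (n+m) hnm - M n hn - M m hm)) :=
      ((hMt (n+m) hnm).sub (hMt n hn)).sub (hMt m hm)
    have hbound : ∀ k : ℕ, ‖a (2^k * (n+m)) / (2:ℝ)^k - a (2^k * n) / (2:ℝ)^k
        - a (2^k * m) / (2:ℝ)^k‖ ≤ φ ((2:ℝ)^k * (((n+m : ℕ):ℝ)*C)) / 2^k := by
      intro k
      rw [Real.norm_eq_abs]
      have h1 : 1 ≤ 2^k * n := Nat.mul_pos (pow_pos (by norm_num) k) hn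
      have h2 : 1 ≤ 2^k * m := Nat.mul_pos (pow_pos (by norm_num) k) hm
      have hkey := key (2^k*n) (2^k*m) h1 h2
      have hnat : 2^k*n + 2^k*m = 2^k*(n+m) := by ring
      rw [hnat] at hkey
      have hcast : ((2^k*(n+m) : ℕ) : ℝ) * C = (2:ℝ)^k * (((n+m:ℕ):ℝ)*C) := by
        push_cast; ring
      rw [hcast] at hkey
      have hpos : (0:ℝ) < (2:ℝ)^k := by positivity
      have heq : a (2^k * (n+m)) / (2:ℝ)^k - a (2^k * n) / (2:ℝ)^k - a (2^k * m) / (2:ℝ)^k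
          = (a (2^k*(n+m)) - a (2^k*n) - a (2^k*m)) / 2^k := by field_simp
      rw [heq, abs_div, abs_of_pos hpos]
      gcongr
    have hc0 : Tendsto (fun k : ℕ => φ ((2:ℝ)^k * (((n+m:ℕ):ℝ)*C)) / 2^k) atTop (𝓝 0) := by
      rw [← tendsto_add_atTop_iff_nat 1]
      exact (hDsum (n+m) hnm).tendsto_atTop_zero
    have hF0 := squeeze_zero_norm hbound hc0
    have := tendsto_nhds_unique hF hF0
    linarith
  -- linearity of M
  have hlin : ∀ n (hn : 1 ≤ n), M n hn = n * M 1 le_rfl := by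
    intro n hn
    induction n, hn using Nat.le_induction with
    | base => simp
    | succ n hn ih =>
      have h := hadd n 1 hn le_rfl (by omega)
      rw [h, ih]
      push_cast
      ring
  refine ⟨M 1 le_rfl, ?_⟩
  rw [tendsto_iff_dist_tendsto_zero]
  have hbnd : ∀ᶠ n : ℕ in atTop,
      dist (a n / n) (M 1 le_rfl) ≤ 4 * C * T (2*((n:ℝ)*C)) := by
    filter_upwards [eventually_ge_atTop 1] with n hn
    have hn0 : (0:ℝ) < (n:ℝ) := by exact_mod_cast hn
    have hMn := hMb n hn
    rw [hlin n hn] at hMn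
    have heq : a n / n - M 1 le_rfl = (a n - n * M 1 le_rfl) / n := by field_simp
    rw [Real.dist_eq, heq, abs_div, abs_of_pos hn0]
    calc |a n - ↑n * M 1 le_rfl| / ↑n ≤ (4 * ((n:ℝ)*C) * T (2*((n:ℝ)*C))) / n := by
          gcongr
          rw [abs_sub_comm]
          exact hMn
      _ = 4 * C * T (2*((n:ℝ)*C)) := by field_simp
  have hinner : Tendsto (fun n : ℕ => 2*((n:ℝ)*C)) atTop atTop := by
    apply Tendsto.const_mul_atTop (by norm_num : (0:ℝ) < 2)
    exact tendsto_natCast_atTop_atTop.atTop_mul_const (lt_of_lt_of_le one_pos hC)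
  have htail : Tendsto (fun n : ℕ => 4 * C * T (2*((n:ℝ)*C))) atTop (𝓝 0) := by
    have := ((tail_tendsto _ hint).comp hinner).const_mul (4*C)
    simpa using this
  exact squeeze_zero' (Eventually.of_forall fun n => dist_nonneg) hbnd htail



/-- If `G` carries a norm `ν`, `φ` is increasing on `[1,∞)` (extended by `φ(t) = φ(1)` for
`t ≤ 1`), nonnegative, with `∫₁^∞ φ(t)/t² dt < ∞`, and
`|f(g) − f(gh) + f(h)| ≤ φ(ν(g) + ν(h))` for all `g, h`, then for every `g` the limit
`lim_{n→∞} f(gⁿ)/n` exists; i.e. `f` admits a homogenisation. -/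
theorem homogenisation_exists {G : Type*} [Group G] (ν : G → ℝ)
    (hν_nonneg : ∀ g : G, 0 ≤ ν g)
    (hν_zero : ∀ g : G, ν g = 0 ↔ g = 1)
    (hν_inv : ∀ g : G, ν g⁻¹ = ν g)
    (hν_mul : ∀ g h : G, ν (g * h) ≤ ν g + ν h)
    (φ : ℝ → ℝ)
    (hmono : ∀ s t : ℝ, 1 ≤ s → s ≤ t → φ s ≤ φ t)
    (hext : ∀ t : ℝ, t ≤ 1 → φ t = φ 1)
    (hnonneg : ∀ t : ℝ, 0 ≤ φ t)
    (hint : MeasureTheory.IntegrableOn (fun t : ℝ => φ t / t ^ 2) (Set.Ici (1 : ℝ)))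
    (f : G → ℝ)
    (hf : ∀ g h : G, |f g - f (g * h) + f h| ≤ φ (ν g + ν h)) :
    ∀ g : G, ∃ L : ℝ, Tendsto (fun n : ℕ => f (g ^ n) / n) atTop (𝓝 L) := by
  intro g
  have hν1 : ν (1:G) = 0 := (hν_zero 1).mpr rfl
  have hνpow : ∀ n : ℕ, ν (g^n) ≤ n * ν g := by
    intro n
    induction n with
    | zero => simp [hν1]
    | succ n ih =>
      have h1 : ν (g^(n+1)) ≤ ν (g^n) + ν g := by
        rw [pow_succ]; exact hν_mul _ _
      push_cast
      nlinarith
  set C : ℝ := max (ν g) 1 with hCdef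
  have hC : 1 ≤ C := le_max_right _ _
  have hνgC : ν g ≤ C := le_max_left _ _
  apply almost_additive_limit φ hmono hnonneg hint (fun n => f (g^n)) C hC
  intro n m hn hm
  have hkey := hf (g^n) (g^m)
  rw [← pow_add] at hkey
  have hs : ν (g^n) + ν (g^m) ≤ (↑(n+m)) * C := by
    have h1 := hνpow n
    have h2 := hνpow m
    have hn0 : (0:ℝ) ≤ (n:ℝ) := Nat.cast_nonneg n
    have hm0 : (0:ℝ) ≤ (m:ℝ) := Nat.cast_nonneg m
    have h3 : (n:ℝ) * ν g ≤ (n:ℝ) * C := mul_le_mul_of_nonneg_left hνgC hn0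
    have h4 : (m:ℝ) * ν g ≤ (m:ℝ) * C := mul_le_mul_of_nonneg_left hνgC hm0
    push_cast
    linarith
  have hφ : φ (ν (g^n) + ν (g^m)) ≤ φ ((↑(n+m)) * C) := by
    have hnm1 : (1:ℝ) ≤ (↑(n+m):ℝ) * C := by
      have h5 : (1:ℝ) ≤ ((n+m:ℕ):ℝ) := by
        have : 1 ≤ n + m := le_trans hn (Nat.le_add_right n m)
        exact_mod_cast this
      nlinarith
    by_cases hcase : 1 ≤ ν (g^n) + ν (g^m)
    · exact hmono _ _ hcase hs
    · rw [hext _ (le_of_not_ge hcase)]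
      exact hmono 1 _ le_rfl hnm1
  show |f (g^(n+m)) - f (g^n) - f (g^m)| ≤ φ ((↑(n+m)) * C)
  rw [show f (g^(n+m)) - f (g^n) - f (g^m)
      = -(f (g^n) - f (g^(n+m)) + f (g^m)) by ring, abs_neg]
  exact le_trans hkey hφ
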